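/- For every closed lambda term M, the translated first-order term ⌊M⌋ is canonical; moreover, canonicity is preserved by rewriting in Φ: if t is canonical and t → u in Φ, then u is canonical. -/

import Mathlib

/-- Pure untyped λ-terms with named variables. -/
inductive Tm : Type
  | var : ℕ → Tm
  | lam : ℕ → Tm → Tm
  | app : Tm → Tm → Tm
deriving DecidableEq

namespace Tm

/-- Free variables. -/
def fv : Tm → Finset ℕ
  | var x => {x}
  | lam x M => fv M \ {x}
  | app M N => fv M ∪ fv N

/-- A term is closed when it has no free variables. -/
def Closed (M : Tm) : Prop := fv M = ∅

/-- Values: variables and abstractions. -/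
def IsValue : Tm → Prop
  | var _ => True
  | lam _ _ => True
  | app _ _ => False

/-- (Naive) substitution `M{N/x}`. -/
def subst : Tm → ℕ → Tm → Tm
  | var y, x, N => if y = x then N else var y
  | lam y P, x, N => if y = x then lam y P else lam y (subst P x N)
  | app P Q, x, N => app (subst P x N) (subst Q x N)

/-- Weak call-by-value reduction: β-redexes whose argument is a value,
closed under both application contexts, never under λ. -/
inductive Cbv : Tm → Tm → Prop
  | beta {x M V} : IsValue V → Cbv (app (lam x M) V) (subst M x V)
  | appL {M N L} : Cbv M N → Cbv (app M L) (app N L)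
  | appR {M N L} : Cbv M N → Cbv (app L M) (app L N)

/-- The subterm relation on λ-terms. -/
inductive Sub : Tm → Tm → Prop
  | refl (M) : Sub M M
  | lam {M N x} : Sub M N → Sub M (lam x N)
  | appL {M N L} : Sub M N → Sub M (app N L)
  | appR {M N L} : Sub M L → Sub M (app N L)

end Tm

/-- `M N₁ … Nₖ` (left-nested application). -/
def appList : Tm → List Tm → Tm := List.foldl Tm.app

/-- `λx₁.…λxₖ.M`. -/
def lams : List ℕ → Tm → Tm := fun xs M => xs.foldr Tm.lam M

/-- `stepsN R n a b`: `a` reduces to `b` in exactly `n` `R`-steps. -/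
def stepsN {α : Type*} (R : α → α → Prop) : ℕ → α → α → Prop
  | 0, a, b => a = b
  | n + 1, a, b => ∃ c, R a c ∧ stepsN R n c b

/-- `a` is an `R`-normal form. -/
def NormalForm {α : Type*} (R : α → α → Prop) (a : α) : Prop := ¬ ∃ b, R a b

/-- Terms of the constructor rewrite system Φ: variables, the binary function
symbol `app`, and a constructor `c_{x,M}` for each variable `x` and λ-term `M`. -/
inductive PTm : Type
  | pvar : ℕ → PTm
  | papp : PTm → PTm → PTm
  | con : ℕ → Tm → List PTm → PTm

namespace PTm

/-- The (sorted) list of free variables of a λ-term. -/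
def fvList (M : Tm) : List ℕ := (Tm.fv M).sort (· ≤ ·)

/-- The translation `⌊·⌋` from λ-terms to Φ-terms. -/
def toP : Tm → PTm
  | .var x => pvar x
  | .lam x M => con x M ((fvList (Tm.lam x M)).map pvar)
  | .app M N => papp (toP M) (toP N)

/-- Simultaneous (sequential, for closed arguments) λ-substitution `M{Nᵢ/xᵢ}`. -/
def substList (M : Tm) (xs : List ℕ) (Ns : List Tm) : Tm :=
  (xs.zip Ns).foldl (fun acc p => Tm.subst acc p.1 p.2) M

/-- The readback `⌈·⌉` from Φ-terms to λ-terms. -/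
def toL : PTm → Tm
  | pvar x => .var x
  | papp u v => .app (toL u) (toL v)
  | con x M ts =>
      substList (Tm.lam x M) (fvList (Tm.lam x M)) (ts.attach.map fun t => toL t.1)
termination_by t => sizeOf t
decreasing_by all_goals first
  | (simp_wf; have := List.sizeOf_lt_of_mem t.2; omega)
  | (simp_wf; omega)
  | simp_wf

/-- First-order substitution on Φ-terms. -/
def psubst : PTm → ℕ → PTm → PTm
  | pvar y, x, N => if y = x then N else pvar y
  | papp u v, x, N => papp (psubst u x N) (psubst v x N)
  | con y M ts, x, N => con y M (ts.attach.map fun t => psubst t.1 x N)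
termination_by t _ _ => sizeOf t
decreasing_by all_goals first
  | (simp_wf; have := List.sizeOf_lt_of_mem t.2; omega)
  | (simp_wf; omega)
  | simp_wf

/-- Simultaneous (sequential, for ground arguments) substitution on Φ-terms. -/
def psubstList (t : PTm) (xs : List ℕ) (us : List PTm) : PTm :=
  (xs.zip us).foldl (fun acc p => psubst acc p.1 p.2) t

/-- Constructor terms of Φ: ground terms built from constructors only. -/
inductive IsConT : PTm → Prop
  | con {x M ts} : (∀ t ∈ ts, IsConT t) → IsConT (con x M ts)

/-- Well-formed Φ-terms: every constructor `c_{x,M}` gets exactly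
`|FV(λx.M)|` arguments. -/
inductive WF : PTm → Prop
  | pvar (x) : WF (pvar x)
  | papp {u v} : WF u → WF v → WF (papp u v)
  | con {x M ts} : ts.length = (fvList (Tm.lam x M)).length →
      (∀ t ∈ ts, WF t) → WF (con x M ts)

/-- Canonical closed Φ-terms: constructor terms, or `app` of canonical terms. -/
inductive Canonical : PTm → Prop
  | ofCon {t} : IsConT t → Canonical t
  | papp {u v} : Canonical u → Canonical v → Canonical (papp u v)

/-- Call-by-value rewriting in Φ: the rules are
`app(c_{x,M}(x₁,…,xₙ), x) → ⌊M⌋` (with `FV(λx.M) = x₁,…,xₙ`), matched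
variables are instantiated by constructor terms, and rewriting is closed
under arbitrary contexts. -/
inductive Step : PTm → PTm → Prop
  | beta {x : ℕ} {M : Tm} {ts : List PTm} {v : PTm} :
      (∀ t ∈ ts, IsConT t) → IsConT v →
      ts.length = (fvList (Tm.lam x M)).length →
      Step (papp (con x M ts) v)
        (psubstList (toP M) (fvList (Tm.lam x M) ++ [x]) (ts ++ [v]))
  | appL {u u' v} : Step u u' → Step (papp u v) (papp u' v)
  | appR {u v v'} : Step v v' → Step (papp u v) (papp u v')
  | conArg {x M t t' l r} : Step t t' →
      Step (con x M (l ++ t :: r)) (con x M (l ++ t' :: r))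

/-- Variables occurring in a Φ-term. -/
def pvarsOf : PTm → Finset ℕ
  | pvar x => {x}
  | papp u v => pvarsOf u ∪ pvarsOf v
  | con _ _ ts => ts.attach.foldr (fun t s => pvarsOf t.1 ∪ s) ∅
termination_by t => sizeOf t
decreasing_by all_goals first
  | (simp_wf; have := List.sizeOf_lt_of_mem t.2; omega)
  | (simp_wf; omega)
  | simp_wf

/-- The subterm relation on Φ-terms. -/
inductive PSub : PTm → PTm → Prop
  | refl (t) : PSub t t
  | appL {t u v} : PSub t u → PSub t (papp u v)
  | appR {t u v} : PSub t v → PSub t (papp u v)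
  | conArg {t u x M ts} : u ∈ ts → PSub t u → PSub t (con x M ts)

end PTm

namespace PTm

/-- Almost-constructor terms: leaves are variables in `s` or constructors. -/
inductive AC (s : Set ℕ) : PTm → Prop
  | pvar {x} : x ∈ s → AC s (pvar x)
  | con {x M ts} : (∀ t ∈ ts, AC s t) → AC s (con x M ts)

/-- Almost-canonical terms with free variables in `s`. -/
inductive ACan (s : Set ℕ) : PTm → Prop
  | ofAC {t} : AC s t → ACan s t
  | papp {u v} : ACan s u → ACan s v → ACan s (papp u v)

lemma AC.mono {s s' : Set ℕ} (h : s ⊆ s') : ∀ {t}, AC s t → AC s' t := by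
  intro t ht
  induction ht with
  | pvar hx => exact AC.pvar (h hx)
  | con _ ih => exact AC.con ih

lemma ACan.mono {s s' : Set ℕ} (h : s ⊆ s') {t} (ht : ACan s t) : ACan s' t := by
  induction ht with
  | ofAC h' => exact ACan.ofAC (h'.mono h)
  | papp _ _ ih1 ih2 => exact ACan.papp ih1 ih2

lemma IsConT.ac {t} (h : IsConT t) {s : Set ℕ} : AC s t := by
  induction h with
  | con _ ih => exact AC.con ih

lemma AC.isConT {t} (h : AC (∅ : Set ℕ) t) : IsConT t := by
  induction h with
  | pvar hx => exact absurd hx (by simp)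
  | con _ ih => exact IsConT.con ih

lemma ACan.canonical {t} (h : ACan (∅ : Set ℕ) t) : Canonical t := by
  induction h with
  | ofAC h' => exact Canonical.ofCon h'.isConT
  | papp _ _ ih1 ih2 => exact Canonical.papp ih1 ih2

lemma psubst_con {y M ts x N} :
    psubst (con y M ts) x N = con y M (ts.map (psubst · x N)) := by
  rw [psubst]
  congr 1
  simp

lemma AC.psubst {s : Set ℕ} {t} (ht : AC s t) {x N} (hN : IsConT N) :
    AC (s \ {x}) (psubst t x N) := by
  induction ht with
  | @pvar y hy =>
      by_cases h : y = x
      · simp only [PTm.psubst, h, if_pos rfl]; exact hN.ac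
      · simp only [PTm.psubst, if_neg h]; exact AC.pvar ⟨hy, h⟩
  | con _ ih =>
      rw [psubst_con]
      refine AC.con ?_
      intro u hu
      rcases List.mem_map.1 hu with ⟨w, hw, rfl⟩
      exact ih w hw

lemma ACan.psubst {s : Set ℕ} {t} (ht : ACan s t) {x N} (hN : IsConT N) :
    ACan (s \ {x}) (psubst t x N) := by
  induction ht with
  | ofAC h' => exact ACan.ofAC (h'.psubst hN)
  | papp _ _ ih1 ih2 => rw [PTm.psubst]; exact ACan.papp ih1 ih2

lemma ACan.psubstList {xs : List ℕ} : ∀ {us : List PTm} {s : Set ℕ} {t},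
    xs.length ≤ us.length → ACan s t → (∀ u ∈ us, IsConT u) →
    ACan (s \ {y | y ∈ xs}) (psubstList t xs us) := by
  induction xs with
  | nil =>
      intro us s t _ ht _
      have he : PTm.psubstList t [] us = t := rfl
      rw [he]
      exact ht.mono (fun y hy => Set.mem_diff_of_mem hy
        (fun h => absurd (by simpa using h : y ∈ ([] : List ℕ)) List.not_mem_nil))
  | cons x xs ih =>
      intro us s t hlen ht hus
      cases us with
      | nil => simp at hlen
      | cons u us =>
          have h1 := ht.psubst (x := x) (hus u (by simp))
          have h2 := ih (by simpa using Nat.le_of_succ_le_succ hlen) h1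
            (fun w hw => hus w (by simp [hw]))
          have : PTm.psubstList t (x :: xs) (u :: us) = PTm.psubstList (PTm.psubst t x u) xs us := by
            simp [PTm.psubstList]
          rw [this]
          refine h2.mono ?_
          rintro y ⟨⟨hy, hy1⟩, hy2⟩
          refine ⟨hy, ?_⟩
          simp only [Set.mem_setOf_eq, List.mem_cons, not_or]
          exact ⟨by simpa using hy1, by simpa using hy2⟩

lemma mem_fvList {M : Tm} {y : ℕ} : y ∈ fvList M ↔ y ∈ Tm.fv M := by
  simp [fvList, Finset.mem_sort]

lemma toP_acan (M : Tm) : ACan {y | y ∈ Tm.fv M} (toP M) := by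
  induction M with
  | var x => exact ACan.ofAC (AC.pvar (by simp [Tm.fv]))
  | lam x M _ =>
      refine ACan.ofAC (AC.con ?_)
      intro t ht
      rcases List.mem_map.1 ht with ⟨y, hy, rfl⟩
      exact AC.pvar (by simpa using mem_fvList.1 hy)
  | app M N ihM ihN =>
      refine ACan.papp (ihM.mono ?_) (ihN.mono ?_) <;>
        · intro y hy; simp only [Set.mem_setOf_eq, Tm.fv, Finset.mem_union]
          first | exact Or.inl hy | exact Or.inr hy

lemma no_step_of_isConT {t u} (h : Step t u) (hc : IsConT t) : False := by
  induction h with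
  | beta => cases hc
  | appL => cases hc
  | appR => cases hc
  | @conArg x M t t' l r _ ih =>
      cases hc with
      | con h => exact ih (h t (by simp))

end PTm

/-- for every closed λ-term `M` the translation `⌊M⌋` is
canonical, and canonicity of Φ-terms is preserved by Φ-rewriting. -/
theorem canonicity :
    (∀ M : Tm, Tm.Closed M → PTm.Canonical (PTm.toP M)) ∧
      (∀ t u : PTm, PTm.WF t → PTm.Canonical t → PTm.Step t u →
        PTm.Canonical u) := by
  constructor
  · intro M hM
    refine ((PTm.toP_acan M).mono ?_).canonical
    have hM' : Tm.fv M = ∅ := hM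
    intro y hy
    simp only [Set.mem_setOf_eq, hM', Finset.notMem_empty] at hy
  · intro t u hwf hc hs
    clear hwf
    induction hs with
    | @beta x M ts v hts hv hlen =>
        have h0 := PTm.toP_acan M
        have h := h0.psubstList (xs := PTm.fvList (Tm.lam x M) ++ [x])
          (us := ts ++ [v]) (by simp [hlen]) (by
            intro w hw
            rcases List.mem_append.1 hw with h' | h'
            · exact hts w h'
            · rw [List.mem_singleton] at h'; subst h'; exact hv)
        refine (h.mono ?_).canonical
        rintro y ⟨hy, hy2⟩
        exfalso
        apply hy2
        simp only [Set.mem_setOf_eq, List.mem_append, List.mem_singleton]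
        by_cases hyx : y = x
        · exact Or.inr hyx
        · exact Or.inl (PTm.mem_fvList.2 (by
            simp only [Tm.fv, Finset.mem_sdiff, Finset.mem_singleton]
            exact ⟨hy, hyx⟩))
    | appL h ih =>
        cases hc with
        | ofCon h' => cases h'
        | papp h1 h2 => exact PTm.Canonical.papp (ih h1) h2
    | appR h ih =>
        cases hc with
        | ofCon h' => cases h'
        | papp h1 h2 => exact PTm.Canonical.papp h1 (ih h2)
    | @conArg x M t t' l r h ih =>
        cases hc with
        | ofCon h' =>
            cases h' with
            | con h'' => exact absurd (PTm.no_step_of_isConT h (h'' t (by simp))) not_false
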